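/- Fix ξ, E ∈ ℝ and n ≥ 1 with E² = ξ² + 2n and E ≠ ξ. Then the function φ(y) = c (√(2n) φ_{n-1}(y), (E-ξ) φ_n(y))ᵀ, with c = (2n + (E-ξ)²)^{-1/2}, is a normalized L²(ℝ; ℂ²) solution of the eigenvalue problem [[ξ, 𝔞],[𝔞*, -ξ]] φ = E φ, where 𝔞 = ∂_y + y and φ_k are normalized Hermite functions. -/

import Mathlib

open MeasureTheory

/-- The annihilation operator `𝔞 = d/dy + y`. -/
noncomputable def annOp (f : ℝ → ℝ) : ℝ → ℝ := fun y => deriv f y + y * f y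

/-- The creation operator `𝔞* = -d/dy + y`. -/
noncomputable def creOp (f : ℝ → ℝ) : ℝ → ℝ := fun y => -deriv f y + y * f y

/-- The normalized Hermite functions: `φ₀(y) = π^{-1/4} e^{-y²/2}` and
`φ_{n+1} = (2(n+1))^{-1/2} 𝔞* φ_n`. -/
noncomputable def hermiteFun : ℕ → ℝ → ℝ
  | 0 => fun y => Real.pi ^ (-(1 : ℝ) / 4) * Real.exp (-y ^ 2 / 2)
  | n + 1 => fun y => (Real.sqrt (2 * (n + 1)))⁻¹ * creOp (hermiteFun n) y

section HermiteAux
open Polynomial Real Filter Topology intervalIntegral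

noncomputable def hp : ℕ → Polynomial ℝ
  | 0 => C (Real.pi ^ (-(1 : ℝ) / 4))
  | n + 1 => C (Real.sqrt (2 * (n + 1)))⁻¹ * (C 2 * X * hp n - (hp n).derivative)

lemma hasDerivAt_pg (p : ℝ[X]) (y : ℝ) :
    HasDerivAt (fun y => p.eval y * Real.exp (-y^2/2))
      ((p.derivative.eval y - y * p.eval y) * Real.exp (-y^2/2)) y := by
  have h2 : HasDerivAt (fun y : ℝ => Real.exp (-y^2/2)) (Real.exp (-y^2/2) * -y) y := by
    have h : HasDerivAt (fun y : ℝ => -y^2/2) (-(2 * y^1)/2) y :=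
      ((hasDerivAt_pow 2 y).neg.div_const 2)
    rw [show (-(2 * y^1)/2 : ℝ) = -y by ring] at h
    exact h.exp
  have := (p.hasDerivAt y).mul h2
  exact this.congr_deriv (by ring)

lemma deriv_pg (p : ℝ[X]) (y : ℝ) :
    deriv (fun y => p.eval y * Real.exp (-y^2/2)) y
      = (p.derivative.eval y - y * p.eval y) * Real.exp (-y^2/2) :=
  (hasDerivAt_pg p y).deriv

lemma hermite_eq (n : ℕ) : hermiteFun n = fun y => (hp n).eval y * Real.exp (-y^2/2) := by
  induction n with
  | zero => simp [hermiteFun, hp]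
  | succ n ih =>
    funext y
    simp only [hermiteFun, hp, creOp, ih, deriv_pg]
    simp [eval_mul, eval_sub]
    ring

lemma sqrt_two_mul_pos (k : ℕ) : (0:ℝ) < Real.sqrt (2 * (k+1)) := by
  apply Real.sqrt_pos.2; positivity

lemma hp_succ (n : ℕ) :
    hp (n+1) = C (Real.sqrt (2 * (n+1)))⁻¹ * (C 2 * X * hp n - (hp n).derivative) := rfl

lemma deriv_hp (k : ℕ) :
    (hp (k+1)).derivative = C (Real.sqrt (2 * (k+1))) * hp k := by
  induction k with
  | zero =>
    rw [hp_succ]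
    show derivative (C (Real.sqrt (2 * ((0:ℕ)+1)))⁻¹ * (C 2 * X * C (Real.pi ^ (-(1:ℝ)/4)) - derivative (C (Real.pi ^ (-(1:ℝ)/4))))) = _
    rw [show hp 0 = C (Real.pi ^ (-(1:ℝ)/4)) from rfl]
    simp only [derivative_C, sub_zero, derivative_C_mul, derivative_mul, derivative_X,
      zero_mul, zero_add, mul_one, mul_zero, add_zero]
    rw [← C_mul, ← C_mul, ← C_mul]
    congr 1
    rw [Nat.cast_zero, zero_add, mul_one]
    rw [show ((2:ℝ)) = Real.sqrt 2 * Real.sqrt 2 from (Real.mul_self_sqrt (by norm_num)).symm]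
    field_simp
    rw [Real.sqrt_sq (Real.sqrt_nonneg 2)]
  | succ k ih =>
    have hss : Real.sqrt (2*((k:ℝ)+1)) * Real.sqrt (2*((k:ℝ)+1)) = 2*((k:ℝ)+1) :=
      Real.mul_self_sqrt (by positivity)
    have key : C 2 * X * hp k - (hp k).derivative
        = C (Real.sqrt (2 * ((k:ℝ)+1))) * hp (k+1) := by
      rw [hp_succ k, ← mul_assoc, ← C_mul,
        mul_inv_cancel₀ (ne_of_gt (by simpa using sqrt_two_mul_pos k)), C_1, one_mul]
    rw [hp_succ (k+1), derivative_C_mul, derivative_sub, derivative_mul, derivative_mul,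
      derivative_C, derivative_X, ih, derivative_C_mul]
    rw [zero_mul, zero_add, mul_one,
      show C 2 * X * (C (Real.sqrt (2*((k:ℝ)+1))) * hp k)
        = C (Real.sqrt (2*((k:ℝ)+1))) * (C 2 * X * hp k) by ring,
      add_sub_assoc, ← mul_sub, key]
    rw [show C 2 * hp (k+1) + C (Real.sqrt (2*((k:ℝ)+1))) * (C (Real.sqrt (2*((k:ℝ)+1))) * hp (k+1))
        = C (2 + Real.sqrt (2*((k:ℝ)+1)) * Real.sqrt (2*((k:ℝ)+1))) * hp (k+1) by
        rw [C_add, C_mul]; ring]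
    rw [hss, ← mul_assoc, ← C_mul]
    congr 2
    have hx : (2:ℝ) + 2*((k:ℝ)+1) = 2*((↑(k+1):ℝ)+1) := by push_cast; ring
    rw [hx, inv_mul_eq_div, Real.div_sqrt]

lemma annOp_pg (p : ℝ[X]) :
    annOp (fun y => p.eval y * Real.exp (-y^2/2))
      = fun y => p.derivative.eval y * Real.exp (-y^2/2) := by
  funext y; simp only [annOp, deriv_pg]; ring

lemma creOp_pg (p : ℝ[X]) :
    creOp (fun y => p.eval y * Real.exp (-y^2/2))
      = fun y => (C 2 * X * p - p.derivative).eval y * Real.exp (-y^2/2) := by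
  funext y; simp only [creOp, deriv_pg, eval_sub, eval_mul, eval_C, eval_X]; ring

lemma hasDerivAt_pg2 (p : ℝ[X]) (y : ℝ) :
    HasDerivAt (fun y => p.eval y * Real.exp (-y^2))
      (((p.derivative - C 2 * (X * p)).eval y) * Real.exp (-y^2)) y := by
  have h : HasDerivAt (fun y : ℝ => -y^2) (-(2 * y^1)) y := (hasDerivAt_pow 2 y).neg
  rw [show (-(2 * y^1) : ℝ) = -(2*y) by ring] at h
  have h2 := h.exp
  have := (p.hasDerivAt y).mul h2
  exact this.congr_deriv (by simp only [eval_sub, eval_mul, eval_C, eval_X]; ring)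

lemma integrable_pg1 (p : ℝ[X]) :
    Integrable fun y => p.eval y * Real.exp (-y^2) := by
  have base : ∀ (m : ℕ) (a : ℝ), Integrable fun y : ℝ => (a * y^m) * Real.exp (-y^2) := by
    intro m a
    have h := integrable_rpow_mul_exp_neg_mul_sq (b := 1) one_pos
      (s := (m:ℝ)) (lt_of_lt_of_le neg_one_lt_zero (Nat.cast_nonneg m))
    simp only [neg_mul, one_mul] at h
    have h2 : Integrable fun y : ℝ => y^m * Real.exp (-y^2) := by
      refine h.congr (Eventually.of_forall fun y => ?_)
      norm_num [Real.rpow_natCast]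
    simpa [mul_assoc] using h2.const_mul a
  induction p using Polynomial.induction_on' with
  | add p q hp hq => simpa [add_mul] using (show Integrable (fun y => p.eval y * Real.exp (-y^2) + q.eval y * Real.exp (-y^2)) from hp.add hq)
  | monomial m a => simpa [eval_monomial] using base m a

lemma tendsto_pg_atTop (p : ℝ[X]) :
    Tendsto (fun y => p.eval y * Real.exp (-y^2)) atTop (𝓝 0) := by
  have h1 := p.tendsto_div_exp_atTop
  have h2 : Tendsto (fun y : ℝ => Real.exp (y - y^2)) atTop (𝓝 0) := by
    apply Real.tendsto_exp_atBot.comp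
    apply tendsto_atBot_mono (fun y : ℝ => (by nlinarith [sq_nonneg (y-1)] : y - y^2 ≤ 1 - y))
    refine (tendsto_atBot_add_const_left atTop (1:ℝ) tendsto_neg_atTop_atBot).congr fun y => ?_
    ring
  have h3 := h1.mul h2
  rw [zero_mul] at h3
  refine h3.congr fun y => ?_
  rw [div_mul_eq_mul_div, mul_div_assoc, ← Real.exp_sub]
  congr 1
  ring

lemma tendsto_pg_atBot (p : ℝ[X]) :
    Tendsto (fun y => p.eval y * Real.exp (-y^2)) atBot (𝓝 0) := by
  have h := (tendsto_pg_atTop (p.comp (-X))).comp tendsto_neg_atBot_atTop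
  refine h.congr fun y => ?_
  simp [Function.comp, eval_comp]

lemma integral_pg_deriv (r : ℝ[X]) :
    ∫ y : ℝ, ((r.derivative - C 2 * (X * r)).eval y * Real.exp (-y^2)) = 0 := by
  set q := r.derivative - C 2 * (X * r) with hq
  have hder : ∀ x : ℝ, HasDerivAt (fun y => r.eval y * Real.exp (-y^2))
      (q.eval x * Real.exp (-x^2)) x := fun x => hasDerivAt_pg2 r x
  have hint := integrable_pg1 q
  have hIoi : ∫ x in Set.Ioi (0:ℝ), q.eval x * Real.exp (-x^2)
      = 0 - (r.eval 0 * Real.exp (-(0:ℝ)^2)) :=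
    integral_Ioi_of_hasDerivAt_of_tendsto' (fun x _ => hder x)
      hint.integrableOn (tendsto_pg_atTop r)
  have hIic : ∫ x in Set.Iic (0:ℝ), q.eval x * Real.exp (-x^2)
      = (r.eval 0 * Real.exp (-(0:ℝ)^2)) - 0 :=
    integral_Iic_of_hasDerivAt_of_tendsto' (fun x _ => hder x)
      hint.integrableOn (tendsto_pg_atBot r)
  rw [← integral_Iic_add_Ioi (b := (0:ℝ)) hint.integrableOn hint.integrableOn, hIoi, hIic]
  ring

lemma ibp (p q : ℝ[X]) :
    ∫ y : ℝ, ((C 2 * X * p - p.derivative) * q).eval y * Real.exp (-y^2)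
      = ∫ y : ℝ, (p * q.derivative).eval y * Real.exp (-y^2) := by
  have h0 := integral_pg_deriv (p*q)
  have hA := integrable_pg1 ((C 2 * X * p - p.derivative) * q)
  have hB := integrable_pg1 (p * q.derivative)
  have hpt : ∀ y : ℝ, ((p*q).derivative - C 2 * (X*(p*q))).eval y * Real.exp (-y^2)
      = (p * q.derivative).eval y * Real.exp (-y^2)
        - ((C 2 * X * p - p.derivative) * q).eval y * Real.exp (-y^2) := by
    intro y
    simp only [derivative_mul, eval_sub, eval_add, eval_mul, eval_C, eval_X]
    ring
  have h0' : (∫ y : ℝ, (p*q.derivative).eval y * Real.exp (-y^2))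
      - ∫ y : ℝ, ((C 2*X*p - p.derivative)*q).eval y * Real.exp (-y^2) = 0 := by
    rw [← integral_sub hB hA, ← h0]
    exact integral_congr_ae (Eventually.of_forall fun y => (hpt y).symm)
  linarith

lemma herm_sq (j : ℕ) (y : ℝ) :
    (hermiteFun j y)^2 = (hp j * hp j).eval y * Real.exp (-y^2) := by
  rw [hermite_eq j]
  simp only [eval_mul]
  rw [pow_two, mul_mul_mul_comm, ← Real.exp_add, show -y^2/2 + -y^2/2 = -y^2 by ring]

lemma herm_sq_integrable (j : ℕ) : Integrable fun y : ℝ => (hermiteFun j y)^2 :=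
  (integrable_pg1 (hp j * hp j)).congr (Eventually.of_forall fun y => (herm_sq j y).symm)

lemma norm_hermite (k : ℕ) : (∫ y : ℝ, (hermiteFun k y)^2) = 1 := by
  induction k with
  | zero =>
    have hpt : ∀ y : ℝ, (hermiteFun 0 y)^2 = Real.pi ^ (-(1:ℝ)/2) * Real.exp (-(1:ℝ)*y^2) := by
      intro y
      show (Real.pi ^ (-(1:ℝ)/4) * Real.exp (-y^2/2))^2 = _
      rw [mul_pow, ← Real.rpow_natCast (Real.pi ^ (-(1:ℝ)/4)) 2,
        ← Real.rpow_mul Real.pi_pos.le, pow_two, ← Real.exp_add]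
      norm_num
    rw [integral_congr_ae (Eventually.of_forall hpt), MeasureTheory.integral_const_mul,
      integral_gaussian, div_one, Real.sqrt_eq_rpow, ← Real.rpow_add Real.pi_pos]
    norm_num
  | succ k ih =>
    have hs := sqrt_two_mul_pos k
    have e1 : ∀ y : ℝ, (hermiteFun (k+1) y)^2
        = (Real.sqrt (2*((k:ℝ)+1)))⁻¹
          * (((C 2 * X * hp k - (hp k).derivative) * hp (k+1)).eval y * Real.exp (-y^2)) := by
      intro y
      rw [pow_two, show hermiteFun (k+1) y
          = (Real.sqrt (2*((k:ℝ)+1)))⁻¹ * creOp (hermiteFun k) y from rfl,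
        hermite_eq k, creOp_pg]
      simp only [hp_succ k, eval_mul, eval_C]
      rw [show Real.exp (-y^2) = Real.exp (-y^2/2) * Real.exp (-y^2/2) by
        rw [← Real.exp_add]; ring_nf]
      ring
    rw [integral_congr_ae (Eventually.of_forall e1), MeasureTheory.integral_const_mul, ibp, deriv_hp k]
    have e2 : ∀ y : ℝ, (hp k * (C (Real.sqrt (2*((k:ℝ)+1))) * hp k)).eval y * Real.exp (-y^2)
        = Real.sqrt (2*((k:ℝ)+1)) * (hermiteFun k y)^2 := by
      intro y
      rw [herm_sq k]
      simp only [eval_mul, eval_C]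
      ring
    rw [integral_congr_ae (Eventually.of_forall e2), MeasureTheory.integral_const_mul, ih,
      mul_one, inv_mul_cancel₀ (ne_of_gt hs)]

lemma key_cre (k : ℕ) : C 2 * X * hp k - (hp k).derivative
    = C (Real.sqrt (2*((k:ℝ)+1))) * hp (k+1) := by
  rw [hp_succ k, ← mul_assoc, ← C_mul,
    mul_inv_cancel₀ (ne_of_gt (by simpa using sqrt_two_mul_pos k)), C_1, one_mul]

end HermiteAux

open Polynomial Real Filter Topology intervalIntegral in
/-- For `E² = ξ² + 2n`, `E ≠ ξ`, `n ≥ 1`, the vector function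
`φ = c (√(2n) φ_{n-1}, (E-ξ) φ_n)` with `c = (2n + (E-ξ)²)^{-1/2}` is a normalized
solution of the eigenvalue problem `[[ξ, 𝔞],[𝔞*, -ξ]] φ = E φ`. -/
theorem dirac_generalized_eigenfunction (ξ E : ℝ) (n : ℕ) (hn : 1 ≤ n)
    (hE : E ^ 2 = ξ ^ 2 + 2 * n) (hEξ : E ≠ ξ)
    (c : ℝ) (hc : c = (Real.sqrt (2 * n + (E - ξ) ^ 2))⁻¹)
    (φ1 φ2 : ℝ → ℝ)
    (hφ1 : φ1 = fun y => c * (Real.sqrt (2 * n) * hermiteFun (n - 1) y))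
    (hφ2 : φ2 = fun y => c * ((E - ξ) * hermiteFun n y)) :
    (∀ y : ℝ, ξ * φ1 y + annOp φ2 y = E * φ1 y) ∧
    (∀ y : ℝ, creOp φ1 y - ξ * φ2 y = E * φ2 y) ∧
    (∫ y : ℝ, ((φ1 y) ^ 2 + (φ2 y) ^ 2)) = 1 := by
  obtain ⟨m, rfl⟩ : ∃ m, n = m + 1 := ⟨n - 1, (Nat.succ_pred_eq_of_pos hn).symm⟩
  have hφ1p : φ1 = fun y => (C (c * Real.sqrt (2*((m:ℝ)+1))) * hp m).eval y
      * Real.exp (-y^2/2) := by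
    rw [hφ1]; funext y
    rw [Nat.add_sub_cancel, hermite_eq m]
    push_cast
    simp only [eval_mul, eval_C]
    ring
  have hφ2p : φ2 = fun y => (C (c * (E - ξ)) * hp (m+1)).eval y * Real.exp (-y^2/2) := by
    rw [hφ2]; funext y
    rw [hermite_eq (m+1)]
    simp only [eval_mul, eval_C]
    ring
  have hE' : E^2 = ξ^2 + 2*((m:ℝ)+1) := by rw [hE]; push_cast; ring
  refine ⟨?_, ?_, ?_⟩
  · intro y
    rw [hφ1p, hφ2p, annOp_pg, derivative_C_mul, deriv_hp m]
    simp only [eval_mul, eval_C]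
    ring
  · intro y
    rw [hφ1p, hφ2p, creOp_pg, derivative_C_mul]
    have hss : Real.sqrt (2*((m:ℝ)+1)) * Real.sqrt (2*((m:ℝ)+1)) = 2*((m:ℝ)+1) :=
      Real.mul_self_sqrt (by positivity)
    have ev := congrArg (eval y) (key_cre m)
    simp only [eval_sub, eval_mul, eval_C, eval_X] at ev ⊢
    linear_combination (c * Real.sqrt (2*((m:ℝ)+1)) * Real.exp (-y^2/2)) * ev
      + (c * (hp (m+1)).eval y * Real.exp (-y^2/2)) * hss
      - (c * (hp (m+1)).eval y * Real.exp (-y^2/2)) * hE'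
  · have hsq := Real.sq_sqrt (show (0:ℝ) ≤ 2*((m+1:ℕ):ℝ) by positivity)
    have hpt : ∀ y : ℝ, (φ1 y)^2 + (φ2 y)^2
        = (c^2*(2*((m+1:ℕ):ℝ))) * (hermiteFun m y)^2
          + (c^2*(E-ξ)^2) * (hermiteFun (m+1) y)^2 := by
      intro y
      rw [hφ1, hφ2, Nat.add_sub_cancel]
      linear_combination (c^2*(hermiteFun m y)^2) * hsq
    rw [integral_congr_ae (Eventually.of_forall hpt),
      integral_add ((herm_sq_integrable m).const_mul _) ((herm_sq_integrable (m+1)).const_mul _),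
      MeasureTheory.integral_const_mul, MeasureTheory.integral_const_mul, norm_hermite, norm_hermite, mul_one, mul_one, hc]
    have h1 : (0:ℝ) < (E-ξ)^2 := by
      have h2 := sub_ne_zero.mpr hEξ
      positivity
    have hD : (0:ℝ) < 2*((m+1:ℕ):ℝ) + (E-ξ)^2 :=
      add_pos_of_nonneg_of_pos (by positivity) h1
    rw [← mul_add, inv_pow, Real.sq_sqrt hD.le]
    exact inv_mul_cancel₀ hD.ne'
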